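/- Let g be a finite-dimensional Lie algebra with basis (x_i) and structure constants C^k_{ij}. In the algebra generated by even generators χ_i, odd generators γ_i, Ω^i with relations: χ's satisfy the Lie algebra relations χ_iχ_j − χ_jχ_i = C^k_{ij}χ_k; γ's and Ω's anticommute among themselves; γ_jΩ^i + Ω^iγ_j = δ^i_j; χ_jΩ^i − Ω^iχ_j = Ω^k C^i_{kj}; and γ_iχ_j − χ_jγ_i = C^k_{ji}γ_k — the element Q = Ω^i χ_i − (1/2) Ω^j Ω^i C^k_{ij} γ_k satisfies Q² = 0. -/
import Mathlib

open scoped BigOperators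

section BrstHelpers

variable {n : ℕ} {M : Type*} [AddCommMonoid M]

private lemma brst_rot3 (f : Fin n → Fin n → Fin n → M) :
    ∑ a, ∑ b, ∑ c, f a b c = ∑ b, ∑ c, ∑ a, f a b c :=
  (Finset.sum_comm).trans (Finset.sum_congr rfl fun _ _ => Finset.sum_comm)

private lemma brst_rot4 (f : Fin n → Fin n → Fin n → Fin n → M) :
    ∑ a, ∑ b, ∑ c, ∑ d, f a b c d = ∑ b, ∑ c, ∑ d, ∑ a, f a b c d :=
  (Finset.sum_comm).trans
    (Finset.sum_congr rfl fun b _ => brst_rot3 fun a c d => f a b c d)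

private lemma brst_rot5 (f : Fin n → Fin n → Fin n → Fin n → Fin n → M) :
    ∑ a, ∑ b, ∑ c, ∑ d, ∑ e, f a b c d e = ∑ b, ∑ c, ∑ d, ∑ e, ∑ a, f a b c d e :=
  (Finset.sum_comm).trans
    (Finset.sum_congr rfl fun b _ => brst_rot4 fun a c d e => f a b c d e)

private lemma brst_rot6 (f : Fin n → Fin n → Fin n → Fin n → Fin n → Fin n → M) :
    ∑ a, ∑ b, ∑ c, ∑ d, ∑ e, ∑ g, f a b c d e g
      = ∑ b, ∑ c, ∑ d, ∑ e, ∑ g, ∑ a, f a b c d e g :=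
  (Finset.sum_comm).trans
    (Finset.sum_congr rfl fun b _ => brst_rot5 fun a c d e g => f a b c d e g)

end BrstHelpers

/-- The classical BRST operator `Q = Ω^i χ_i − (1/2) Ω^j Ω^i C^k_{ij} γ_k`. -/
noncomputable def brstQ {N : ℕ} {A : Type*} [Ring A] [Algebra ℂ A]
    (C : Fin N → Fin N → Fin N → ℂ) (χ γ Ω : Fin N → A) : A :=
  (∑ i, Ω i * χ i) - (2⁻¹ : ℂ) • ∑ i, ∑ j, ∑ k, C k i j • (Ω j * Ω i * γ k)

set_option maxHeartbeats 2000000 in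
/-- For a Lie algebra with structure constants `C^k_{ij}`
(antisymmetric and satisfying the Jacobi identity), in the algebra generated by even
generators `χ_i` and odd generators `γ_i`, `Ω^i` with the relations
`χ_iχ_j − χ_jχ_i = C^k_{ij}χ_k`, `γ`'s and `Ω`'s anticommuting among themselves,
`γ_jΩ^i + Ω^iγ_j = δ^i_j`, `χ_jΩ^i − Ω^iχ_j = Ω^k C^i_{kj}` and
`γ_iχ_j − χ_jγ_i = C^k_{ji}γ_k`, the element
`Q = Ω^i χ_i − (1/2) Ω^j Ω^i C^k_{ij} γ_k` satisfies `Q² = 0`. -/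
theorem brstQ_squares_to_zero (N : ℕ) (A : Type*) [Ring A] [Algebra ℂ A]
    (C : Fin N → Fin N → Fin N → ℂ) (χ γ Ω : Fin N → A)
    (hCanti : ∀ k i j, C k i j = -C k j i)
    (hJacobi : ∀ i j n l,
      (∑ p, C p i j * C l n p) + (∑ p, C p j n * C l i p) + (∑ p, C p n i * C l j p) = 0)
    (hχχ : ∀ i j, χ i * χ j - χ j * χ i = ∑ k, C k i j • χ k)
    (hγγ : ∀ i j, γ i * γ j + γ j * γ i = 0)
    (hΩΩ : ∀ i j, Ω i * Ω j + Ω j * Ω i = 0)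
    (hγΩ : ∀ i j, γ j * Ω i + Ω i * γ j = if i = j then 1 else 0)
    (hχΩ : ∀ i j, χ j * Ω i - Ω i * χ j = ∑ k, C i k j • Ω k)
    (hγχ : ∀ i j, γ i * χ j - χ j * γ i = ∑ k, C k j i • γ k) :
    brstQ C χ γ Ω * brstQ C χ γ Ω = 0 := by
  -- reoriented relations
  have hχΩ' : ∀ a b, χ a * Ω b = Ω b * χ a + ∑ k, C b k a • Ω k :=
    fun a b => sub_eq_iff_eq_add'.mp (hχΩ b a)
  have hγχ' : ∀ a b, γ a * χ b = χ b * γ a + ∑ q, C q b a • γ q :=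
    fun a b => sub_eq_iff_eq_add'.mp (hγχ a b)
  have hΩΩ' : ∀ a b, Ω a * Ω b = -(Ω b * Ω a) :=
    fun a b => eq_neg_of_add_eq_zero_left (hΩΩ a b)
  have hγγ' : ∀ a b, γ a * γ b = -(γ b * γ a) :=
    fun a b => eq_neg_of_add_eq_zero_left (hγγ a b)
  have hswap : ∀ a b (y : A), Ω a * (Ω b * y) = -(Ω b * (Ω a * y)) := by
    intro a b y
    rw [← mul_assoc, hΩΩ' a b, neg_mul, mul_assoc]
  have hcyc : ∀ a b c (y : A), Ω a * (Ω b * (Ω c * y)) = Ω b * (Ω c * (Ω a * y)) := by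
    intro a b c y
    rw [hswap a b, hswap a c, mul_neg, neg_neg]
  have hcyc' : ∀ a b c (y : A), Ω a * (Ω b * (Ω c * y)) = Ω c * (Ω a * (Ω b * y)) := by
    intro a b c y
    rw [hcyc a b c, hcyc b c a]
  have hpair : ∀ a b c d (y : A),
      Ω a * (Ω b * (Ω c * (Ω d * y))) = Ω c * (Ω d * (Ω a * (Ω b * y))) := by
    intro a b c d y
    rw [hcyc b c d y, hcyc a c d (Ω b * y)]
  have hχmove : ∀ l b (y : A),
      χ l * (Ω b * y) = Ω b * (χ l * y) + ∑ p, C b p l • (Ω p * y) := by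
    intro l b y
    calc χ l * (Ω b * y) = (χ l * Ω b) * y := by rw [mul_assoc]
      _ = (Ω b * χ l + ∑ p, C b p l • Ω p) * y := by rw [hχΩ']
      _ = Ω b * (χ l * y) + ∑ p, C b p l • (Ω p * y) := by
          simp only [add_mul, Finset.sum_mul, smul_mul_assoc, mul_assoc]
  have hγΩ'' : ∀ k l (y : A),
      γ k * (Ω l * y) = (if l = k then y else 0) - Ω l * (γ k * y) := by
    intro k l y
    calc γ k * (Ω l * y) = (γ k * Ω l) * y := by rw [mul_assoc]
      _ = ((if l = k then (1 : A) else 0) - Ω l * γ k) * y := by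
          rw [eq_sub_of_add_eq (hγΩ l k)]
      _ = (if l = k then y else 0) - Ω l * (γ k * y) := by
          rw [sub_mul, ite_mul, one_mul, zero_mul, mul_assoc]
  -- Q = S + (1/2) E
  have hT : (∑ i, ∑ j, ∑ k, C k i j • (Ω j * Ω i * γ k))
      = -∑ i, ∑ j, ∑ k, C k i j • (Ω i * (Ω j * γ k)) := by
    calc (∑ i, ∑ j, ∑ k, C k i j • (Ω j * Ω i * γ k))
        = ∑ j, ∑ i, ∑ k, C k i j • (Ω j * Ω i * γ k) := Finset.sum_comm
      _ = ∑ a, ∑ b, ∑ k, -(C k a b • (Ω a * (Ω b * γ k))) := by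
          refine Finset.sum_congr rfl fun a _ => Finset.sum_congr rfl fun b _ =>
            Finset.sum_congr rfl fun k _ => ?_
          rw [hCanti k b a, mul_assoc, neg_smul]
      _ = -∑ i, ∑ j, ∑ k, C k i j • (Ω i * (Ω j * γ k)) := by
          simp only [Finset.sum_neg_distrib]
  have hQ : brstQ C χ γ Ω
      = (∑ i, Ω i * χ i)
        + (2⁻¹ : ℂ) • ∑ i, ∑ j, ∑ k, C k i j • (Ω i * (Ω j * γ k)) := by
    rw [brstQ, hT, smul_neg, sub_neg_eq_add]
  -- S * S
  have hSS : (∑ i, Ω i * χ i) * (∑ i, Ω i * χ i)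
      = (∑ i, ∑ j, Ω i * (Ω j * (χ i * χ j)))
        + ∑ i, ∑ j, ∑ k, C j k i • (Ω i * (Ω k * χ j)) := by
    calc (∑ i, Ω i * χ i) * (∑ i, Ω i * χ i)
        = ∑ i, ∑ j, Ω i * (χ i * (Ω j * χ j)) := by
          simp only [Finset.sum_mul, Finset.mul_sum, mul_assoc]
          exact Finset.sum_comm
      _ = ∑ i, ∑ j, (Ω i * (Ω j * (χ i * χ j))
            + ∑ k, C j k i • (Ω i * (Ω k * χ j))) := by
          refine Finset.sum_congr rfl fun i _ => Finset.sum_congr rfl fun j _ => ?_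
          rw [hχmove i j (χ j)]
          simp only [mul_add, Finset.mul_sum, mul_smul_comm]
      _ = _ := by simp only [Finset.sum_add_distrib]
  have hP : (∑ i, ∑ j, Ω i * (Ω j * (χ i * χ j)))
        + (∑ i, ∑ j, Ω i * (Ω j * (χ i * χ j)))
      = ∑ i, ∑ j, ∑ k, C k i j • (Ω i * (Ω j * χ k)) := by
    nth_rewrite 2 [show (∑ i, ∑ j, Ω i * (Ω j * (χ i * χ j)))
        = ∑ i, ∑ j, Ω j * (Ω i * (χ j * χ i)) from Finset.sum_comm]
    rw [← Finset.sum_add_distrib]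
    refine Finset.sum_congr rfl fun i _ => ?_
    rw [← Finset.sum_add_distrib]
    refine Finset.sum_congr rfl fun j _ => ?_
    rw [hswap j i (χ j * χ i), ← sub_eq_add_neg, ← mul_sub, ← mul_sub, hχχ i j]
    simp only [Finset.mul_sum, mul_smul_comm]
  have hR : (∑ i, ∑ j, ∑ k, C j k i • (Ω i * (Ω k * χ j)))
      = -∑ i, ∑ j, ∑ k, C k i j • (Ω i * (Ω j * χ k)) := by
    calc (∑ i, ∑ j, ∑ k, C j k i • (Ω i * (Ω k * χ j)))
        = ∑ i, ∑ k, ∑ j, C j k i • (Ω i * (Ω k * χ j)) :=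
          Finset.sum_congr rfl fun i _ => Finset.sum_comm
      _ = ∑ i, ∑ j, ∑ k, -(C k i j • (Ω i * (Ω j * χ k))) := by
          refine Finset.sum_congr rfl fun i _ => Finset.sum_congr rfl fun j _ =>
            Finset.sum_congr rfl fun k _ => ?_
          rw [hCanti k j i, neg_smul]
      _ = _ := by simp only [Finset.sum_neg_distrib]
  -- collapse lemma used twice
  have hcollapseV1 : (∑ i, ∑ j, ∑ k, ∑ l, ∑ q, (C k i j * C q l k) • (Ω i * (Ω j * (Ω l * γ q))))
      = ∑ a, ∑ b, ∑ c, ∑ d, (∑ p, C p a b * C d c p) • (Ω a * (Ω b * (Ω c * γ d))) := by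
    conv_lhs => enter [2]; ext i; enter [2]; ext j; rw [brst_rot3]
    conv_lhs => enter [2]; ext i; enter [2]; ext j; enter [2]; ext l; enter [2]; ext q; rw [← Finset.sum_smul]
  -- S * E
  have hSE : (∑ i, Ω i * χ i) * (∑ i, ∑ j, ∑ k, C k i j • (Ω i * (Ω j * γ k)))
      = (∑ i, ∑ j, ∑ k, ∑ l, C k i j • (Ω i * (Ω j * (Ω l * (χ l * γ k)))))
        + ((∑ a, ∑ b, ∑ c, ∑ d, (∑ p, C d b p * C p c a) • (Ω a * (Ω b * (Ω c * γ d))))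
          + (∑ a, ∑ b, ∑ c, ∑ d, (∑ p, C d b p * C p c a) • (Ω a * (Ω b * (Ω c * γ d))))) := by
    have hpc2 : (∑ i, ∑ j, ∑ k, ∑ l, ∑ p, (C k i j * C j p l) • (Ω l * (Ω i * (Ω p * γ k))))
        = ∑ a, ∑ b, ∑ c, ∑ d, (∑ p, C d b p * C p c a) • (Ω a * (Ω b * (Ω c * γ d))) := by
      conv_lhs => enter [2]; ext i; rw [brst_rot4]
      conv_lhs => enter [2]; ext i; enter [2]; ext k; enter [2]; ext l; enter [2]; ext p; rw [← Finset.sum_smul]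
      rw [brst_rot4, brst_rot4]
      conv_lhs => enter [2]; ext l; rw [brst_rot3]
      conv_lhs => enter [2]; ext l; enter [2]; ext i; rw [Finset.sum_comm]
    have hpc3 : (∑ i, ∑ j, ∑ k, ∑ l, ∑ p, (C k i j * C i p l) • (Ω l * (Ω p * (Ω j * γ k))))
        = ∑ a, ∑ b, ∑ c, ∑ d, (∑ p, C d b p * C p c a) • (Ω a * (Ω b * (Ω c * γ d))) := by
      calc (∑ i, ∑ j, ∑ k, ∑ l, ∑ p, (C k i j * C i p l) • (Ω l * (Ω p * (Ω j * γ k))))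
          = ∑ i, ∑ j, ∑ k, ∑ l, ∑ p, (C k j i * C i p l) • (Ω l * (Ω j * (Ω p * γ k))) := by
            refine Finset.sum_congr rfl fun i _ => Finset.sum_congr rfl fun j _ =>
              Finset.sum_congr rfl fun k _ => Finset.sum_congr rfl fun l _ =>
              Finset.sum_congr rfl fun p _ => ?_
            rw [hswap p j (γ k), mul_neg, smul_neg, hCanti k j i, neg_mul, neg_smul]
        _ = ∑ a, ∑ b, ∑ c, ∑ d, (∑ p, C d b p * C p c a) • (Ω a * (Ω b * (Ω c * γ d))) := by
            rw [brst_rot5]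
            conv_lhs => enter [2]; ext j; enter [2]; ext k; enter [2]; ext l; enter [2]; ext p; rw [← Finset.sum_smul]
            rw [brst_rot4, brst_rot4]
            conv_lhs => enter [2]; ext l; rw [brst_rot3]
            conv_lhs => enter [2]; ext l; enter [2]; ext j; rw [Finset.sum_comm]
    calc (∑ i, Ω i * χ i) * (∑ i, ∑ j, ∑ k, C k i j • (Ω i * (Ω j * γ k)))
        = ∑ i, ∑ j, ∑ k, ∑ l, C k i j • (Ω l * (χ l * (Ω i * (Ω j * γ k)))) := by
          simp only [Finset.sum_mul, Finset.mul_sum, Finset.smul_sum, mul_smul_comm, mul_assoc]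
      _ = ∑ i, ∑ j, ∑ k, ∑ l,
            (C k i j • (Ω i * (Ω j * (Ω l * (χ l * γ k))))
              + ((∑ p, (C k i j * C i p l) • (Ω l * (Ω p * (Ω j * γ k))))
                + ∑ p, (C k i j * C j p l) • (Ω l * (Ω i * (Ω p * γ k))))) := by
          refine Finset.sum_congr rfl fun i _ => Finset.sum_congr rfl fun j _ =>
            Finset.sum_congr rfl fun k _ => Finset.sum_congr rfl fun l _ => ?_
          rw [hχmove l i (Ω j * γ k), hχmove l j (γ k)]
          simp only [mul_add, Finset.mul_sum, mul_smul_comm, smul_add, Finset.smul_sum,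
            smul_smul]
          rw [hcyc l i j (χ l * γ k)]
          abel
      _ = (∑ i, ∑ j, ∑ k, ∑ l, C k i j • (Ω i * (Ω j * (Ω l * (χ l * γ k)))))
            + ((∑ i, ∑ j, ∑ k, ∑ l, ∑ p, (C k i j * C i p l) • (Ω l * (Ω p * (Ω j * γ k))))
              + ∑ i, ∑ j, ∑ k, ∑ l, ∑ p, (C k i j * C j p l) • (Ω l * (Ω i * (Ω p * γ k)))) := by
          simp only [Finset.sum_add_distrib]
      _ = _ := by rw [hpc2, hpc3]
  -- E * S
  have hES : (∑ i, ∑ j, ∑ k, C k i j • (Ω i * (Ω j * γ k))) * (∑ i, Ω i * χ i)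
      = (∑ i, ∑ j, ∑ k, C k i j • (Ω i * (Ω j * χ k)))
        - (∑ i, ∑ j, ∑ k, ∑ l, C k i j • (Ω i * (Ω j * (Ω l * (χ l * γ k)))))
        - ∑ a, ∑ b, ∑ c, ∑ d, (∑ p, C p a b * C d c p) • (Ω a * (Ω b * (Ω c * γ d))) := by
    calc (∑ i, ∑ j, ∑ k, C k i j • (Ω i * (Ω j * γ k))) * (∑ i, Ω i * χ i)
        = ∑ l, ∑ i, ∑ j, ∑ k, C k i j • (Ω i * (Ω j * (γ k * (Ω l * χ l)))) := by
          simp only [Finset.sum_mul, Finset.mul_sum, Finset.smul_sum, smul_mul_assoc,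
            mul_assoc]
      _ = ∑ i, ∑ j, ∑ k, ∑ l, C k i j • (Ω i * (Ω j * (γ k * (Ω l * χ l)))) := brst_rot4 _
      _ = ∑ i, ∑ j, ∑ k, ∑ l,
            ((if l = k then C k i j • (Ω i * (Ω j * χ l)) else 0)
              - C k i j • (Ω i * (Ω j * (Ω l * (χ l * γ k))))
              - ∑ q, (C k i j * C q l k) • (Ω i * (Ω j * (Ω l * γ q)))) := by
          refine Finset.sum_congr rfl fun i _ => Finset.sum_congr rfl fun j _ =>
            Finset.sum_congr rfl fun k _ => Finset.sum_congr rfl fun l _ => ?_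
          rw [hγΩ'' k l (χ l), hγχ' k l]
          simp only [mul_sub, mul_add, mul_ite, mul_zero, Finset.mul_sum, mul_smul_comm,
            smul_sub, smul_add, smul_ite, smul_zero, smul_smul, Finset.smul_sum]
          abel
      _ = (∑ i, ∑ j, ∑ k, ∑ l, if l = k then C k i j • (Ω i * (Ω j * χ l)) else 0)
            - (∑ i, ∑ j, ∑ k, ∑ l, C k i j • (Ω i * (Ω j * (Ω l * (χ l * γ k)))))
            - ∑ i, ∑ j, ∑ k, ∑ l, ∑ q, (C k i j * C q l k) • (Ω i * (Ω j * (Ω l * γ q))) := by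
          simp only [Finset.sum_sub_distrib]
      _ = (∑ i, ∑ j, ∑ k, C k i j • (Ω i * (Ω j * χ k)))
            - (∑ i, ∑ j, ∑ k, ∑ l, C k i j • (Ω i * (Ω j * (Ω l * (χ l * γ k)))))
            - ∑ a, ∑ b, ∑ c, ∑ d, (∑ p, C p a b * C d c p) • (Ω a * (Ω b * (Ω c * γ d))) := by
          rw [hcollapseV1]
          congr 2
          refine Finset.sum_congr rfl fun i _ => Finset.sum_congr rfl fun j _ =>
            Finset.sum_congr rfl fun k _ => ?_
          rw [Finset.sum_ite_eq' Finset.univ k (fun l => C k i j • (Ω i * (Ω j * χ l)))]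
          simp only [Finset.mem_univ, if_true]
  -- γ through two Ω's
  have hγ2 : ∀ k l m (y : A), γ k * (Ω l * (Ω m * y))
      = (if l = k then Ω m * y else 0) - (if m = k then Ω l * y else 0)
        + Ω l * (Ω m * (γ k * y)) := by
    intro k l m y
    rw [hγΩ'' k l (Ω m * y), hγΩ'' k m y]
    simp only [mul_sub, mul_ite, mul_zero]
    abel
  -- E * E
  have hEE : (∑ i, ∑ j, ∑ k, C k i j • (Ω i * (Ω j * γ k)))
        * (∑ i, ∑ j, ∑ k, C k i j • (Ω i * (Ω j * γ k)))
      = (-∑ a, ∑ b, ∑ c, ∑ d, (∑ p, C p a b * C d c p) • (Ω a * (Ω b * (Ω c * γ d))))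
        - (∑ a, ∑ b, ∑ c, ∑ d, (∑ p, C p a b * C d c p) • (Ω a * (Ω b * (Ω c * γ d))))
        + 0 := by
    have hEE1 : (∑ i, ∑ j, ∑ k, ∑ l, ∑ m, ∑ n, (C k i j * C n l m) •
          (if l = k then Ω i * (Ω j * (Ω m * γ n)) else 0))
        = -∑ a, ∑ b, ∑ c, ∑ d, (∑ p, C p a b * C d c p) • (Ω a * (Ω b * (Ω c * γ d))) := by
      calc (∑ i, ∑ j, ∑ k, ∑ l, ∑ m, ∑ n, (C k i j * C n l m) •
              (if l = k then Ω i * (Ω j * (Ω m * γ n)) else 0))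
          = ∑ i, ∑ j, ∑ k, ∑ m, ∑ n, ∑ l,
              if l = k then (C k i j * C n l m) • (Ω i * (Ω j * (Ω m * γ n))) else 0 := by
            conv_lhs => enter [2]; ext i; enter [2]; ext j; enter [2]; ext k; rw [brst_rot3]
            simp only [smul_ite, smul_zero]
        _ = ∑ i, ∑ j, ∑ k, ∑ m, ∑ n, (C k i j * C n k m) • (Ω i * (Ω j * (Ω m * γ n))) := by
            refine Finset.sum_congr rfl fun i _ => Finset.sum_congr rfl fun j _ =>
              Finset.sum_congr rfl fun k _ => Finset.sum_congr rfl fun m _ =>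
              Finset.sum_congr rfl fun n _ => ?_
            rw [Finset.sum_ite_eq' Finset.univ k
              (fun l => (C k i j * C n l m) • (Ω i * (Ω j * (Ω m * γ n))))]
            simp only [Finset.mem_univ, if_true]
        _ = ∑ i, ∑ j, ∑ k, ∑ m, ∑ n,
              -((C k i j * C n m k) • (Ω i * (Ω j * (Ω m * γ n)))) := by
            refine Finset.sum_congr rfl fun i _ => Finset.sum_congr rfl fun j _ =>
              Finset.sum_congr rfl fun k _ => Finset.sum_congr rfl fun m _ =>
              Finset.sum_congr rfl fun n _ => ?_
            rw [hCanti n k m, mul_neg, neg_smul]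
        _ = -∑ a, ∑ b, ∑ c, ∑ d, (∑ p, C p a b * C d c p) • (Ω a * (Ω b * (Ω c * γ d))) := by
            simp only [Finset.sum_neg_distrib]
            exact neg_inj.mpr hcollapseV1
    have hEE2 : (∑ i, ∑ j, ∑ k, ∑ l, ∑ m, ∑ n, (C k i j * C n l m) •
          (if m = k then Ω i * (Ω j * (Ω l * γ n)) else 0))
        = ∑ a, ∑ b, ∑ c, ∑ d, (∑ p, C p a b * C d c p) • (Ω a * (Ω b * (Ω c * γ d))) := by
      calc (∑ i, ∑ j, ∑ k, ∑ l, ∑ m, ∑ n, (C k i j * C n l m) •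
              (if m = k then Ω i * (Ω j * (Ω l * γ n)) else 0))
          = ∑ i, ∑ j, ∑ k, ∑ l, ∑ n, ∑ m,
              if m = k then (C k i j * C n l m) • (Ω i * (Ω j * (Ω l * γ n))) else 0 := by
            conv_lhs => enter [2]; ext i; enter [2]; ext j; enter [2]; ext k; enter [2]; ext l; rw [Finset.sum_comm]
            simp only [smul_ite, smul_zero]
        _ = ∑ i, ∑ j, ∑ k, ∑ l, ∑ n, (C k i j * C n l k) • (Ω i * (Ω j * (Ω l * γ n))) := by
            refine Finset.sum_congr rfl fun i _ => Finset.sum_congr rfl fun j _ =>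
              Finset.sum_congr rfl fun k _ => Finset.sum_congr rfl fun l _ =>
              Finset.sum_congr rfl fun n _ => ?_
            rw [Finset.sum_ite_eq' Finset.univ k
              (fun m => (C k i j * C n l m) • (Ω i * (Ω j * (Ω l * γ n))))]
            simp only [Finset.mem_univ, if_true]
        _ = _ := hcollapseV1
    have hEE3 : (∑ i, ∑ j, ∑ k, ∑ l, ∑ m, ∑ n, (C k i j * C n l m) •
          (Ω i * (Ω j * (Ω l * (Ω m * (γ k * γ n)))))) = 0 := by
      have h1 : (∑ i, ∑ j, ∑ k, ∑ l, ∑ m, ∑ n, (C k i j * C n l m) •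
            (Ω i * (Ω j * (Ω l * (Ω m * (γ k * γ n))))))
          = -∑ i, ∑ j, ∑ k, ∑ l, ∑ m, ∑ n, (C k i j * C n l m) •
            (Ω i * (Ω j * (Ω l * (Ω m * (γ k * γ n))))) := by
        calc (∑ i, ∑ j, ∑ k, ∑ l, ∑ m, ∑ n, (C k i j * C n l m) •
                (Ω i * (Ω j * (Ω l * (Ω m * (γ k * γ n))))))
            = ∑ i, ∑ j, ∑ k, ∑ l, ∑ m, ∑ n, (C n l m * C k i j) •
                (Ω l * (Ω m * (Ω i * (Ω j * (γ n * γ k))))) := by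
              rw [brst_rot6, brst_rot6, brst_rot6]
          _ = ∑ i, ∑ j, ∑ k, ∑ l, ∑ m, ∑ n, -((C k i j * C n l m) •
                (Ω i * (Ω j * (Ω l * (Ω m * (γ k * γ n)))))) := by
              refine Finset.sum_congr rfl fun i _ => Finset.sum_congr rfl fun j _ =>
                Finset.sum_congr rfl fun k _ => Finset.sum_congr rfl fun l _ =>
                Finset.sum_congr rfl fun m _ => Finset.sum_congr rfl fun n _ => ?_
              rw [hpair l m i j (γ n * γ k), hγγ' n k]
              simp only [mul_neg, smul_neg, mul_comm (C n l m) (C k i j)]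
          _ = _ := by simp only [Finset.sum_neg_distrib]
      have h2 : (∑ i, ∑ j, ∑ k, ∑ l, ∑ m, ∑ n, (C k i j * C n l m) •
            (Ω i * (Ω j * (Ω l * (Ω m * (γ k * γ n))))))
          + ∑ i, ∑ j, ∑ k, ∑ l, ∑ m, ∑ n, (C k i j * C n l m) •
            (Ω i * (Ω j * (Ω l * (Ω m * (γ k * γ n))))) = 0 := by
        nth_rewrite 2 [h1]
        exact add_neg_cancel _
      calc (∑ i, ∑ j, ∑ k, ∑ l, ∑ m, ∑ n, (C k i j * C n l m) •
              (Ω i * (Ω j * (Ω l * (Ω m * (γ k * γ n))))))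
          = (2⁻¹ : ℂ) • ((∑ i, ∑ j, ∑ k, ∑ l, ∑ m, ∑ n, (C k i j * C n l m) •
              (Ω i * (Ω j * (Ω l * (Ω m * (γ k * γ n))))))
            + ∑ i, ∑ j, ∑ k, ∑ l, ∑ m, ∑ n, (C k i j * C n l m) •
              (Ω i * (Ω j * (Ω l * (Ω m * (γ k * γ n)))))) := by
            rw [← two_smul ℂ, smul_smul]
            norm_num
        _ = 0 := by rw [h2, smul_zero]
    calc (∑ i, ∑ j, ∑ k, C k i j • (Ω i * (Ω j * γ k)))
          * (∑ i, ∑ j, ∑ k, C k i j • (Ω i * (Ω j * γ k)))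
        = ∑ l, ∑ m, ∑ n, ∑ i, ∑ j, ∑ k, (C n l m * C k i j) •
            (Ω i * (Ω j * (γ k * (Ω l * (Ω m * γ n))))) := by
          simp only [Finset.sum_mul, Finset.mul_sum, Finset.smul_sum, smul_mul_assoc,
            mul_smul_comm, smul_smul, mul_assoc]
      _ = ∑ l, ∑ m, ∑ n, ∑ i, ∑ j, ∑ k, (C k i j * C n l m) •
            (Ω i * (Ω j * (γ k * (Ω l * (Ω m * γ n))))) := by
          refine Finset.sum_congr rfl fun l _ => Finset.sum_congr rfl fun m _ =>
            Finset.sum_congr rfl fun n _ => Finset.sum_congr rfl fun i _ =>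
            Finset.sum_congr rfl fun j _ => Finset.sum_congr rfl fun k _ => ?_
          rw [mul_comm (C n l m) (C k i j)]
      _ = ∑ m, ∑ n, ∑ i, ∑ j, ∑ k, ∑ l, (C k i j * C n l m) •
            (Ω i * (Ω j * (γ k * (Ω l * (Ω m * γ n))))) := brst_rot6 _
      _ = ∑ n, ∑ i, ∑ j, ∑ k, ∑ l, ∑ m, (C k i j * C n l m) •
            (Ω i * (Ω j * (γ k * (Ω l * (Ω m * γ n))))) := brst_rot6 _
      _ = ∑ i, ∑ j, ∑ k, ∑ l, ∑ m, ∑ n, (C k i j * C n l m) •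
            (Ω i * (Ω j * (γ k * (Ω l * (Ω m * γ n))))) := brst_rot6 _
      _ = ∑ i, ∑ j, ∑ k, ∑ l, ∑ m, ∑ n,
            ((C k i j * C n l m) • (if l = k then Ω i * (Ω j * (Ω m * γ n)) else 0)
              - (C k i j * C n l m) • (if m = k then Ω i * (Ω j * (Ω l * γ n)) else 0)
              + (C k i j * C n l m) • (Ω i * (Ω j * (Ω l * (Ω m * (γ k * γ n)))))) := by
          refine Finset.sum_congr rfl fun i _ => Finset.sum_congr rfl fun j _ =>
            Finset.sum_congr rfl fun k _ => Finset.sum_congr rfl fun l _ =>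
            Finset.sum_congr rfl fun m _ => Finset.sum_congr rfl fun n _ => ?_
          rw [hγ2 k l m (γ n)]
          simp only [mul_sub, mul_add, mul_ite, mul_zero, Finset.mul_sum, mul_smul_comm,
            smul_sub, smul_add]
      _ = (∑ i, ∑ j, ∑ k, ∑ l, ∑ m, ∑ n, (C k i j * C n l m) •
              (if l = k then Ω i * (Ω j * (Ω m * γ n)) else 0))
            - (∑ i, ∑ j, ∑ k, ∑ l, ∑ m, ∑ n, (C k i j * C n l m) •
              (if m = k then Ω i * (Ω j * (Ω l * γ n)) else 0))
            + ∑ i, ∑ j, ∑ k, ∑ l, ∑ m, ∑ n, (C k i j * C n l m) •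
              (Ω i * (Ω j * (Ω l * (Ω m * (γ k * γ n))))) := by
          simp only [Finset.sum_sub_distrib, Finset.sum_add_distrib]
      _ = _ := by rw [hEE1, hEE2, hEE3]
  -- the cyclic coefficient identity
  have hG0 : ∀ a b c d : Fin N,
      (((∑ p, C d b p * C p c a) - ∑ p, C p a b * C d c p)
        + ((∑ p, C d a p * C p b c) - ∑ p, C p c a * C d b p))
        + ((∑ p, C d c p * C p a b) - ∑ p, C p b c * C d a p) = 0 := by
    intro a b c d
    simp only [← Finset.sum_sub_distrib, ← Finset.sum_add_distrib]
    exact Finset.sum_eq_zero fun p _ => by ring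
  -- Z = U1 - V1 vanishes
  have hZ' : (∑ a, ∑ b, ∑ c, ∑ d, ((∑ p, C d b p * C p c a) - ∑ p, C p a b * C d c p) •
        (Ω a * (Ω b * (Ω c * γ d))))
      = (∑ a, ∑ b, ∑ c, ∑ d, (∑ p, C d b p * C p c a) • (Ω a * (Ω b * (Ω c * γ d))))
        - ∑ a, ∑ b, ∑ c, ∑ d, (∑ p, C p a b * C d c p) • (Ω a * (Ω b * (Ω c * γ d))) := by
    simp only [sub_smul, Finset.sum_sub_distrib]
  have hZ1 : (∑ a, ∑ b, ∑ c, ∑ d, ((∑ p, C d b p * C p c a) - ∑ p, C p a b * C d c p) •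
        (Ω a * (Ω b * (Ω c * γ d))))
      = ∑ a, ∑ b, ∑ c, ∑ d, ((∑ p, C d a p * C p b c) - ∑ p, C p c a * C d b p) •
        (Ω a * (Ω b * (Ω c * γ d))) := by
    calc (∑ a, ∑ b, ∑ c, ∑ d, ((∑ p, C d b p * C p c a) - ∑ p, C p a b * C d c p) •
          (Ω a * (Ω b * (Ω c * γ d))))
        = ∑ a, ∑ b, ∑ c, ∑ d, ((∑ p, C d b p * C p c a) - ∑ p, C p a b * C d c p) •
          (Ω b * (Ω c * (Ω a * γ d))) := by
          refine Finset.sum_congr rfl fun a _ => Finset.sum_congr rfl fun b _ =>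
            Finset.sum_congr rfl fun c _ => Finset.sum_congr rfl fun d _ => ?_
          rw [hcyc a b c (γ d)]
      _ = _ := brst_rot3 _
  have hZ2 : (∑ a, ∑ b, ∑ c, ∑ d, ((∑ p, C d b p * C p c a) - ∑ p, C p a b * C d c p) •
        (Ω a * (Ω b * (Ω c * γ d))))
      = ∑ a, ∑ b, ∑ c, ∑ d, ((∑ p, C d c p * C p a b) - ∑ p, C p b c * C d a p) •
        (Ω a * (Ω b * (Ω c * γ d))) := by
    calc (∑ a, ∑ b, ∑ c, ∑ d, ((∑ p, C d b p * C p c a) - ∑ p, C p a b * C d c p) •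
          (Ω a * (Ω b * (Ω c * γ d))))
        = ∑ a, ∑ b, ∑ c, ∑ d, ((∑ p, C d b p * C p c a) - ∑ p, C p a b * C d c p) •
          (Ω c * (Ω a * (Ω b * γ d))) := by
          refine Finset.sum_congr rfl fun a _ => Finset.sum_congr rfl fun b _ =>
            Finset.sum_congr rfl fun c _ => Finset.sum_congr rfl fun d _ => ?_
          rw [hcyc' a b c (γ d)]
      _ = _ := (brst_rot3 _).trans (brst_rot3 _)
  have hZ0 : (∑ a, ∑ b, ∑ c, ∑ d, ((∑ p, C d b p * C p c a) - ∑ p, C p a b * C d c p) •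
        (Ω a * (Ω b * (Ω c * γ d)))) = 0 := by
    have h3 : ((∑ a, ∑ b, ∑ c, ∑ d, ((∑ p, C d b p * C p c a) - ∑ p, C p a b * C d c p) •
          (Ω a * (Ω b * (Ω c * γ d))))
        + (∑ a, ∑ b, ∑ c, ∑ d, ((∑ p, C d b p * C p c a) - ∑ p, C p a b * C d c p) •
          (Ω a * (Ω b * (Ω c * γ d)))))
        + (∑ a, ∑ b, ∑ c, ∑ d, ((∑ p, C d b p * C p c a) - ∑ p, C p a b * C d c p) •
          (Ω a * (Ω b * (Ω c * γ d)))) = 0 := by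
      nth_rewrite 2 [hZ1]
      nth_rewrite 2 [hZ2]
      simp only [← Finset.sum_add_distrib, ← add_smul]
      refine Finset.sum_eq_zero fun a _ => Finset.sum_eq_zero fun b _ =>
        Finset.sum_eq_zero fun c _ => Finset.sum_eq_zero fun d _ => ?_
      rw [hG0 a b c d, zero_smul]
    calc (∑ a, ∑ b, ∑ c, ∑ d, ((∑ p, C d b p * C p c a) - ∑ p, C p a b * C d c p) •
          (Ω a * (Ω b * (Ω c * γ d))))
        = (3⁻¹ : ℂ) • (((∑ a, ∑ b, ∑ c, ∑ d, ((∑ p, C d b p * C p c a) - ∑ p, C p a b * C d c p) •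
            (Ω a * (Ω b * (Ω c * γ d))))
          + (∑ a, ∑ b, ∑ c, ∑ d, ((∑ p, C d b p * C p c a) - ∑ p, C p a b * C d c p) •
            (Ω a * (Ω b * (Ω c * γ d)))))
          + (∑ a, ∑ b, ∑ c, ∑ d, ((∑ p, C d b p * C p c a) - ∑ p, C p a b * C d c p) •
            (Ω a * (Ω b * (Ω c * γ d))))) := by
          module
        _ = 0 := by rw [h3, smul_zero]
  have hUV : (∑ a, ∑ b, ∑ c, ∑ d, (∑ p, C d b p * C p c a) • (Ω a * (Ω b * (Ω c * γ d))))
      = ∑ a, ∑ b, ∑ c, ∑ d, (∑ p, C p a b * C d c p) • (Ω a * (Ω b * (Ω c * γ d))) :=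
    sub_eq_zero.mp (hZ'.symm.trans hZ0)
  -- final assembly
  rw [hQ, add_mul, mul_add, mul_add, smul_mul_assoc, smul_mul_assoc, mul_smul_comm,
    mul_smul_comm, smul_smul, hSS, hSE, hES, hEE, hR, hUV, ← hP]
  module
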